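/- arXiv:1405.7122 — 2 statements merged into one kernel-verified Lean document; each statement's English description precedes it below -/
import Mathlib

section
/- The alternating sum A_m = Σ_{s ∈ S_m} sgn(s) · u_{s(1)} ⋯ u_{s(m)} in the free associative algebra on generators u_1,…,u_m is a Lie element (i.e., lies in the Lie subalgebra generated by u_1,…,u_m under the commutator bracket) if and only if m = 1 or m = 2. -/
attribute [local instance 100] LieRing.ofAssociativeRing

namespace AltLieAux
open ExteriorAlgebra

variable {k : Type} [Field k]

section general
variable {M : Type} [AddCommGroup M] [Module k M]

lemma swap' (a b : M) : ι k b * ι k a = -(ι k a * ι k b) :=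
  eq_neg_of_add_eq_zero_left (by rw [add_comm]; exact ι_add_mul_swap a b)

lemma comm1 (a b c : M) : ι k c * (ι k a * ι k b) = ι k a * ι k b * ι k c := by
  rw [← mul_assoc, swap' a c, neg_mul, mul_assoc, swap' b c, mul_neg, neg_neg, ← mul_assoc]
end general

section main
variable (k) (m : ℕ)

abbrev EA := ExteriorAlgebra k (Fin m → k)

noncomputable def R1 : Submodule k (EA k m) := LinearMap.range (ι k : (Fin m → k) →ₗ[k] EA k m)

noncomputable def P : Submodule k (EA k m) := (1 ⊔ R1 k m) ⊔ R1 k m * R1 k m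

variable {k m}

lemma hA {z : EA k m} (hz : z ∈ R1 k m * R1 k m) (c : Fin m → k) :
    ι k c * z = z * ι k c := by
  refine Submodule.mul_induction_on (C := fun z => ι k c * z = z * ι k c) hz ?_ ?_
  · rintro p ⟨a, rfl⟩ q ⟨b, rfl⟩
    exact comm1 a b c
  · intro x y hx hy; rw [mul_add, add_mul, hx, hy]

lemma hB {z w : EA k m} (hz : z ∈ R1 k m * R1 k m) (hw : w ∈ R1 k m * R1 k m) :
    z * w = w * z := by
  refine Submodule.mul_induction_on (C := fun w => z * w = w * z) hw ?_ ?_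
  · rintro p ⟨a, rfl⟩ q ⟨b, rfl⟩
    rw [← mul_assoc, ← hA hz a, mul_assoc, ← hA hz b, ← mul_assoc]
  · intro x y hx hy; rw [mul_add, add_mul, hx, hy]

noncomputable def L : LieSubalgebra k (EA k m) where
  __ := P k m
  lie_mem' := by
    intro x y hx hy
    obtain ⟨u, hu, v, hv, rfl⟩ := Submodule.mem_sup.mp hx
    obtain ⟨p, hp, q, hq, rfl⟩ := Submodule.mem_sup.mp hu
    obtain ⟨u', hu', v', hv', rfl⟩ := Submodule.mem_sup.mp hy
    obtain ⟨p', hp', q', hq', rfl⟩ := Submodule.mem_sup.mp hu'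
    obtain ⟨c, rfl⟩ := Submodule.mem_one.mp hp
    obtain ⟨c', rfl⟩ := Submodule.mem_one.mp hp'
    obtain ⟨a, rfl⟩ := hq
    obtain ⟨a', rfl⟩ := hq'
    have hcen : ∀ z : EA k m, ⁅algebraMap k (EA k m) c, z⁆ = 0 ∧
        ⁅z, algebraMap k (EA k m) c'⁆ = 0 := fun z => by
      constructor <;> rw [Ring.lie_def, sub_eq_zero]
      · exact Algebra.commutes c z
      · exact (Algebra.commutes c' z).symm
    simp only [add_lie, lie_add, (hcen _).1, (hcen _).2, zero_add, add_zero]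
    have h11 : ⁅ι k a, ι k a'⁆ ∈ P k m := by
      rw [Ring.lie_def, swap' a a', sub_neg_eq_add]
      exact le_sup_right (α := Submodule k (EA k m)) <| add_mem
        (Submodule.mul_mem_mul ⟨a, rfl⟩ ⟨a', rfl⟩)
        (Submodule.mul_mem_mul ⟨a, rfl⟩ ⟨a', rfl⟩)
    have h12 : ⁅ι k a, v'⁆ = 0 := by rw [Ring.lie_def, hA hv' a, sub_self]
    have h21 : ⁅v, ι k a'⁆ = 0 := by rw [Ring.lie_def, ← hA hv a', sub_self]
    have h22 : ⁅v, v'⁆ = 0 := by rw [Ring.lie_def, hB hv hv', sub_self]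
    rw [h12, h21, h22]
    simpa using h11
end main

section func
variable (k m)

noncomputable def F : ∀ i : ℕ, (Fin m → k) [⋀^Fin i]→ₗ[k] k :=
  fun i => if h : i = m then h.symm ▸ Matrix.detRowAlternating else 0

noncomputable def f : EA k m →ₗ[k] k := liftAlternating (F k m)

variable {k m}

lemma F_m : F k m m = Matrix.detRowAlternating := by
  simp [F]

lemma F_ne {i : ℕ} (h : i ≠ m) : F k m i = 0 := dif_neg h

lemma f_P (h0 : m ≠ 0) (h1 : m ≠ 1) (h2 : m ≠ 2) {x : EA k m} (hx : x ∈ P k m) :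
    f k m x = 0 := by
  obtain ⟨u, hu, v, hv, rfl⟩ := Submodule.mem_sup.mp hx
  obtain ⟨p, hp, q, hq, rfl⟩ := Submodule.mem_sup.mp hu
  obtain ⟨c, rfl⟩ := Submodule.mem_one.mp hp
  obtain ⟨a, rfl⟩ := hq
  have e0 : f k m (algebraMap k (EA k m) c) = 0 := by
    rw [f, liftAlternating_algebraMap, F_ne (Ne.symm h0)]
    simp
  have e1 : ∀ b : Fin m → k, f k m (ι k b) = 0 := fun b => by
    rw [f, liftAlternating_ι, F_ne (Ne.symm h1)]
    simp
  have e2 : f k m v = 0 := by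
    refine Submodule.mul_induction_on (C := fun v => f k m v = 0) hv ?_ ?_
    · rintro p ⟨a, rfl⟩ q ⟨b, rfl⟩
      have : ι k a * ι k b = ιMulti k 2 ![a, b] := by
        simp [ιMulti_apply, List.ofFn_succ]
      rw [this, f, liftAlternating_apply_ιMulti, F_ne (Ne.symm h2)]
      simp
    · intro x y hx hy; rw [map_add, hx, hy, add_zero]
  rw [map_add, map_add, e0, e1, e2]
  simp

lemma f_mono (s : Equiv.Perm (Fin m)) :
    f k m ((List.ofFn fun i : Fin m => ι k (Pi.single (s i) (1 : k))).prod)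
      = ((Equiv.Perm.sign s : ℤ) : k) := by
  rw [f, ← ιMulti_apply, liftAlternating_apply_ιMulti, F_m]
  have hc : (fun i => Pi.single (s i) (1 : k)) = (fun i : Fin m => Pi.single i (1 : k)) ∘ s := rfl
  rw [hc, AlternatingMap.map_perm]
  have : Matrix.detRowAlternating (fun i : Fin m => Pi.single i (1 : k)) = 1 := by
    have : Matrix.of (fun i : Fin m => Pi.single i (1 : k)) = (1 : Matrix (Fin m) (Fin m) k) := by
      ext i j
      simp [Matrix.one_apply, Pi.single_apply, eq_comm]
    rw [Matrix.detRowAlternating]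
    show Matrix.det (Matrix.of fun i : Fin m => Pi.single i (1 : k)) = 1
    rw [this, Matrix.det_one]
  rw [this]
  simp [Units.smul_def]
end func

lemma not_lie [CharZero k] (h0 : m ≠ 0) (h1 : m ≠ 1) (h2 : m ≠ 2)
    (hmem : (∑ s : Equiv.Perm (Fin m),
        ((Equiv.Perm.sign s : ℤ) •
          (List.ofFn fun i : Fin m => FreeAlgebra.ι k (s i)).prod))
      ∈ LieSubalgebra.lieSpan k (FreeAlgebra k (Fin m))
          (Set.range (FreeAlgebra.ι k))) : False := by
  set φ : FreeAlgebra k (Fin m) →ₐ[k] EA k m :=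
    FreeAlgebra.lift k (fun i : Fin m => ι k (Pi.single i (1 : k))) with hφ
  have hle : LieSubalgebra.lieSpan k (FreeAlgebra k (Fin m)) (Set.range (FreeAlgebra.ι k))
      ≤ LieSubalgebra.comap φ.toLieHom (L (k := k) (m := m)) := by
    rw [LieSubalgebra.lieSpan_le]
    rintro x ⟨i, rfl⟩
    show φ (FreeAlgebra.ι k i) ∈ L (k := k) (m := m)
    rw [hφ, FreeAlgebra.lift_ι_apply]
    exact Submodule.mem_sup_left (Submodule.mem_sup_right ⟨_, rfl⟩)
  have hPA : φ (∑ s : Equiv.Perm (Fin m),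
      ((Equiv.Perm.sign s : ℤ) •
        (List.ofFn fun i : Fin m => FreeAlgebra.ι k (s i)).prod)) ∈ P k m := hle hmem
  have hzero := f_P h0 h1 h2 hPA
  rw [map_sum, map_sum] at hzero
  have hterm : ∀ s : Equiv.Perm (Fin m),
      f k m (φ ((Equiv.Perm.sign s : ℤ) •
        (List.ofFn fun i : Fin m => FreeAlgebra.ι k (s i)).prod)) = 1 := by
    intro s
    rw [map_zsmul, map_zsmul]
    have hprod : φ ((List.ofFn fun i : Fin m => FreeAlgebra.ι k (s i)).prod)
        = (List.ofFn fun i : Fin m => ι k (Pi.single (s i) (1 : k))).prod := by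
      rw [map_list_prod, List.map_ofFn]
      have : (⇑φ ∘ fun i : Fin m => FreeAlgebra.ι k (s i))
          = fun i : Fin m => ι k (Pi.single (s i) (1 : k)) := by
        funext i
        simp [hφ, FreeAlgebra.lift_ι_apply]
      rw [this]
    rw [hprod, f_mono, zsmul_eq_mul, ← Int.cast_mul, ← Units.val_mul, Int.units_mul_self]
    simp
  rw [Finset.sum_congr rfl (fun s _ => hterm s)] at hzero
  simp only [Finset.sum_const, Finset.card_univ, nsmul_eq_mul, mul_one] at hzero
  have : (0 : ℕ) < Fintype.card (Equiv.Perm (Fin m)) := Fintype.card_pos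
  exact absurd hzero (by exact_mod_cast this.ne')

end AltLieAux


/-- The alternating sum `A_m = Σ_{s ∈ S_m} sgn(s) u_{s(1)} ⋯ u_{s(m)}` in the free
associative algebra on `m` generators lies in the Lie subalgebra generated by the
generators (under the commutator bracket) if and only if `m = 1` or `m = 2`. -/
theorem alternating_sum_is_lie_iff (k : Type) [Field k] [CharZero k]
    (m : ℕ) (hm : 1 ≤ m) :
    (∑ s : Equiv.Perm (Fin m),
        ((Equiv.Perm.sign s : ℤ) •
          (List.ofFn fun i : Fin m => FreeAlgebra.ι k (s i)).prod))
      ∈ LieSubalgebra.lieSpan k (FreeAlgebra k (Fin m))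
          (Set.range (FreeAlgebra.ι k)) ↔ m = 1 ∨ m = 2 := by
  constructor
  · intro hmem
    by_contra hc
    push_neg at hc
    exact AltLieAux.not_lie (by omega) hc.1 hc.2 hmem
  · rintro (rfl | rfl)
    · have huniv : (Finset.univ : Finset (Equiv.Perm (Fin 1))) = {1} := by decide
      rw [huniv, Finset.sum_singleton]
      simp only [Equiv.Perm.sign_one, Units.val_one, one_smul, List.ofFn_succ, List.ofFn_zero,
        List.prod_cons, List.prod_nil, mul_one]
      exact LieSubalgebra.subset_lieSpan ⟨_, rfl⟩
    · have huniv : (Finset.univ : Finset (Equiv.Perm (Fin 2))) = {1, Equiv.swap 0 1} := by decide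
      rw [huniv, Finset.sum_insert (by decide), Finset.sum_singleton]
      have h1 : Equiv.Perm.sign (1 : Equiv.Perm (Fin 2)) = 1 := by decide
      have h2 : Equiv.Perm.sign (Equiv.swap (0 : Fin 2) 1) = -1 := by decide
      rw [h1, h2]
      simp only [List.ofFn_succ, List.ofFn_zero, List.prod_cons, List.prod_nil, mul_one,
        Units.val_one, one_smul, Units.val_neg, neg_smul, one_smul, Fin.succ_zero_eq_one]
      have hbr : FreeAlgebra.ι k ((1 : Equiv.Perm (Fin 2)) 0)
            * FreeAlgebra.ι k ((1 : Equiv.Perm (Fin 2)) 1)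
          + -(FreeAlgebra.ι k (Equiv.swap (0 : Fin 2) 1 0)
            * FreeAlgebra.ι k (Equiv.swap (0 : Fin 2) 1 1))
          = ⁅FreeAlgebra.ι k (0 : Fin 2), FreeAlgebra.ι k (1 : Fin 2)⁆ := by
        rw [Ring.lie_def]
        norm_num [Equiv.swap_apply_left, Equiv.swap_apply_right]
        rfl
      rw [hbr]
      exact LieSubalgebra.lie_mem _ (LieSubalgebra.subset_lieSpan ⟨_, rfl⟩)
        (LieSubalgebra.subset_lieSpan ⟨_, rfl⟩)
end

section
/- Let V be the space of multilinear elements of degree n in the free anti-commutative algebra AC(x_1,…,x_n), and consider w = {x_1,{x_2,…,{x_{n−1},x_n}…}}. For each i, define the x_i-flip F_i on words in normal form {u_1,{u_2,…,{u_k,x_i}…}} (u_j not containing x_i) by F_i : (ad u_1 ⋯ ad u_k)(x_i) ↦ −(−1)^k (ad u_k ⋯ ad u_1)(x_i). Then the group generated by the flips F_1,…,F_n acting on the orbit of w contains, for every permutation σ ∈ S_n, the signed word sgn(σ)·{x_{σ(1)},{x_{σ(2)},…,{x_{σ(n−1)},x_{σ(n)}}…}}. -/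
/-- The left-normed word `{x_{σ(1)},{x_{σ(2)},…,{x_{σ(n−1)},x_{σ(n)}}…}}` in an
algebra with one bilinear operation (written multiplicatively), for a permutation
`σ` of the `n = m + 1` generators. -/
def leftNormed {B : Type} [NonUnitalNonAssocRing B] {m : ℕ}
    (x : Fin (m + 1) → B) (σ : Equiv.Perm (Fin (m + 1))) : B :=
  (List.ofFn fun i : Fin m => x (σ i.castSucc)).foldr (· * ·) (x (σ (Fin.last m)))

namespace FlipAux

/-! ### List surgery helpers -/

variable {α : Type*} {mm : ℕ}

lemma helper_split1 (g g' : Fin mm → α) (p : ℕ) (hp : p < mm)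
    (hg : ∀ j : Fin mm, (j : ℕ) ≠ p → g' j = g j) :
    List.ofFn g' = (List.ofFn g).take p ++ g' ⟨p, hp⟩ :: (List.ofFn g).drop (p+1) := by
  apply List.ext_getElem
  · simp; omega
  · intro idx h1 h2
    rcases lt_trichotomy idx p with h | h | h
    · rw [List.getElem_append_left (by simp; omega)]
      simp only [List.getElem_take, List.getElem_ofFn]
      exact hg ⟨idx, by omega⟩ (by simp; omega)
    · subst h
      rw [List.getElem_append_right (by simp)]
      simp only [List.length_take, List.length_ofFn, List.getElem_cons]
      rw [dif_pos (by omega)]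
      simp only [List.getElem_ofFn]
    · rw [List.getElem_append_right (by simp; omega)]
      simp only [List.length_take, List.length_ofFn, List.getElem_cons]
      rw [dif_neg (by omega)]
      simp only [List.getElem_drop, List.getElem_ofFn]
      have hl : idx < mm := by simpa using h1
      rw [hg ⟨idx, hl⟩ (by simp; omega)]
      congr 1
      apply Fin.ext
      simp
      omega

lemma helper_split2 (g g' : Fin mm → α) (p : ℕ) (hp : p + 1 < mm)
    (hg : ∀ j : Fin mm, (j : ℕ) ≠ p → (j : ℕ) ≠ p + 1 → g' j = g j) :
    List.ofFn g' = (List.ofFn g).take p ++ g' ⟨p, by omega⟩ :: g' ⟨p+1, hp⟩ ::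
      (List.ofFn g).drop (p+2) := by
  apply List.ext_getElem
  · simp; omega
  · intro idx h1 h2
    rcases Nat.lt_or_ge idx p with h | h
    · rw [List.getElem_append_left (by simp; omega)]
      simp only [List.getElem_take, List.getElem_ofFn]
      exact hg ⟨idx, by omega⟩ (by simp; omega) (by simp; omega)
    · rw [List.getElem_append_right (by simp; omega)]
      simp only [List.length_take, List.length_ofFn, List.getElem_cons]
      rcases Nat.eq_or_lt_of_le h with h' | h'
      · rw [dif_pos (by omega)]
        simp only [List.getElem_ofFn]
        congr 1
        apply Fin.ext
        simp; omega
      · rw [dif_neg (by omega)]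
        rcases Nat.eq_or_lt_of_le h' with h'' | h''
        · rw [dif_pos (by omega)]
          simp only [List.getElem_ofFn]
          congr 1
          apply Fin.ext
          simp; omega
        · rw [dif_neg (by omega)]
          simp only [List.getElem_drop, List.getElem_ofFn]
          have hl : idx < mm := by simpa using h1
          rw [hg ⟨idx, hl⟩ (by simp; omega) (by simp; omega)]
          congr 1
          apply Fin.ext
          simp; omega

lemma mem_take_ofFn {g : Fin mm → α} {p : ℕ} {c : α}
    (h : c ∈ (List.ofFn g).take p) : ∃ j : Fin mm, (j : ℕ) < p ∧ g j = c := by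
  obtain ⟨idx, hidx, rfl⟩ := List.mem_iff_getElem.1 h
  have hlen : idx < mm := by
    have := hidx; simp at this; omega
  refine ⟨⟨idx, hlen⟩, ?_, ?_⟩
  · show idx < p
    have := hidx; simp at this; omega
  · simp only [List.getElem_take, List.getElem_ofFn]

lemma mem_drop_ofFn {g : Fin mm → α} {p : ℕ} {c : α}
    (h : c ∈ (List.ofFn g).drop p) : ∃ j : Fin mm, p ≤ (j : ℕ) ∧ g j = c := by
  obtain ⟨idx, hidx, rfl⟩ := List.mem_iff_getElem.1 h
  have hlen : p + idx < mm := by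
    have := hidx; simp at this; omega
  refine ⟨⟨p + idx, hlen⟩, Nat.le_add_right _ _, ?_⟩
  simp only [List.getElem_drop, List.getElem_ofFn]

/-! ### Combs -/

variable {B : Type} [NonUnitalNonAssocRing B] {n : ℕ}

def comb (x : Fin n → B) (l : List (Fin n)) (a : Fin n) : B :=
  (l.map x).foldr (· * ·) (x a)

lemma comb_cons (x : Fin n → B) (i : Fin n) (l : List (Fin n)) (a : Fin n) :
    comb x (i :: l) a = x i * comb x l a := rfl

lemma foldr_mul_neg (l : List B) (b : B) :
    l.foldr (· * ·) (-b) = - l.foldr (· * ·) b := by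
  induction l with
  | nil => rfl
  | cons u t ih => simp [ih, mul_neg]

lemma comb_append (x : Fin n → B) (l₁ l₂ : List (Fin n)) (a : Fin n) :
    comb x (l₁ ++ l₂) a = (l₁.map x).foldr (· * ·) (comb x l₂ a) := by
  simp [comb, List.foldr_append]

lemma comb_mem (x : Fin n → B) {i : Fin n} {l : List (Fin n)} {a : Fin n}
    (hl : i ∉ l) (ha : a ≠ i) :
    comb x l a ∈ Subsemigroup.closure (x '' {j | j ≠ i}) := by
  induction l with
  | nil => exact Subsemigroup.subset_closure ⟨a, ha, rfl⟩
  | cons b t ih =>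
    have hb : b ≠ i := by rintro rfl; exact hl List.mem_cons_self
    exact mul_mem (Subsemigroup.subset_closure ⟨b, hb, rfl⟩)
      (ih fun h => hl (List.mem_cons_of_mem _ h))

lemma neg_pow_smul_succ (k : ℕ) (v : B) :
    ((-1 : ℤ) ^ (k+1)) • v = -(((-1 : ℤ) ^ k) • v) := by
  rw [pow_succ, mul_smul]; simp

/-! ### Basic flip computations -/

section Flips

variable (x : Fin n → B) (F : Fin n → B → B)
  (hanti : ∀ a b : B, a * b = -(b * a))
  (hFneg : ∀ i b, F i (-b) = -(F i b))
  (hF : ∀ (i : Fin n) (l : List B),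
      (∀ u ∈ l, u ∈ Subsemigroup.closure (x '' {j | j ≠ i})) →
      F i (l.foldr (· * ·) (x i)) =
        ((-1 : ℤ) ^ (l.length + 1)) • (l.reverse.foldr (· * ·) (x i)))

include hFneg in
lemma F_pow (i : Fin n) (e : ℕ) (b : B) :
    F i (((-1 : ℤ) ^ e) • b) = ((-1 : ℤ) ^ e) • F i b := by
  induction e with
  | zero => simp
  | succ k ih =>
    rw [neg_pow_smul_succ, hFneg, ih, neg_pow_smul_succ]

include hF in
lemma L1 {a : Fin n} {l : List (Fin n)} (hl : a ∉ l) :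
    F a (comb x l a) = ((-1 : ℤ) ^ (l.length + 1)) • comb x l.reverse a := by
  have hm : ∀ u ∈ l.map x, u ∈ Subsemigroup.closure (x '' {j | j ≠ a}) := by
    rintro u hu
    obtain ⟨j, hj, rfl⟩ := List.mem_map.1 hu
    exact Subsemigroup.subset_closure ⟨j, fun h => hl (h ▸ hj), rfl⟩
  have := hF a (l.map x) hm
  simpa [comb, List.map_reverse] using this

include hanti hFneg hF in
lemma L2 {i a : Fin n} {l₁ l₂ : List (Fin n)}
    (h1 : i ∉ l₁) (h2 : i ∉ l₂) (ha : a ≠ i) :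
    F i (comb x (l₁ ++ i :: l₂) a) =
      ((-1 : ℤ) ^ (l₁.length + 1)) • (comb x l₂ a * comb x l₁.reverse i) := by
  have key : comb x (l₁ ++ i :: l₂) a
      = -(((l₁.map x) ++ [comb x l₂ a]).foldr (· * ·) (x i)) := by
    rw [comb_append, comb_cons, hanti (x i) (comb x l₂ a), foldr_mul_neg,
      List.foldr_append]
    rfl
  have hm : ∀ u ∈ (l₁.map x) ++ [comb x l₂ a],
      u ∈ Subsemigroup.closure (x '' {j | j ≠ i}) := by
    intro u hu
    rcases List.mem_append.1 hu with hu | hu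
    · obtain ⟨j, hj, rfl⟩ := List.mem_map.1 hu
      exact Subsemigroup.subset_closure ⟨j, fun h => h1 (h ▸ hj), rfl⟩
    · rcases List.mem_singleton.1 hu with rfl
      exact comb_mem x h2 ha
  rw [key, hFneg, hF i _ hm]
  have hrev : ((l₁.map x) ++ [comb x l₂ a]).reverse.foldr (· * ·) (x i)
      = comb x l₂ a * comb x l₁.reverse i := by
    simp [comb, List.map_reverse]
  rw [hrev]
  simp only [List.length_append, List.length_map, List.length_singleton]
  rw [show l₁.length + 1 + 1 = (l₁.length + 1) + 1 from rfl, neg_pow_smul_succ, neg_neg]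

include hanti hF in
lemma L3 {i pl ql : Fin n} {p q : List (Fin n)}
    (hip : i ∉ p) (hpl : pl ≠ i) (hiq : i ∉ q) (hql : ql ≠ i) :
    F i (comb x (i :: p) pl * comb x q ql) = comb x p pl * comb x (i :: q) ql := by
  set P := comb x p pl with hP
  set Q := comb x q ql with hQ
  have key : comb x (i :: p) pl * Q = [Q, P].foldr (· * ·) (x i) := by
    rw [comb_cons, hanti (x i) P, neg_mul, hanti (P * x i) Q, neg_neg]
    rfl
  have hm : ∀ u ∈ [Q, P], u ∈ Subsemigroup.closure (x '' {j | j ≠ i}) := by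
    intro u hu
    rcases hu with _ | ⟨_, hu⟩
    · exact comb_mem x hiq hql
    · rcases List.mem_singleton.1 hu with rfl
      exact comb_mem x hip hpl
  rw [key, hF i _ hm]
  have : ([Q, P].reverse).foldr (· * ·) (x i) = P * (Q * x i) := rfl
  rw [this]
  have h3 : ((-1 : ℤ) ^ (([Q,P] : List B).length + 1)) = -1 := by norm_num
  rw [h3]
  rw [show comb x (i :: q) ql = x i * Q from rfl, hanti (x i) Q]
  simp [mul_neg]

include hanti hF in
lemma L4 {pl ql : Fin n} {p q : List (Fin n)}
    (h1 : ql ∉ p) (h2 : pl ≠ ql) (h3 : ql ∉ q) :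
    F ql (comb x p pl * comb x q ql) =
      ((-1 : ℤ) ^ (q.length + 1)) • comb x (q.reverse ++ ql :: p) pl := by
  set P := comb x p pl with hP
  have key : P * comb x q ql = ((P :: q.map x)).foldr (· * ·) (x ql) := rfl
  have hm : ∀ u ∈ P :: q.map x, u ∈ Subsemigroup.closure (x '' {j | j ≠ ql}) := by
    intro u hu
    rcases hu with _ | ⟨_, hu⟩
    · exact comb_mem x h1 h2
    · obtain ⟨j, hj, rfl⟩ := List.mem_map.1 hu
      exact Subsemigroup.subset_closure ⟨j, fun h => h3 (h ▸ hj), rfl⟩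
  rw [key, hF ql _ hm]
  have hrev : ((P :: q.map x).reverse).foldr (· * ·) (x ql)
      = -(comb x (q.reverse ++ ql :: p) pl) := by
    rw [List.reverse_cons, List.foldr_append]
    have : ([P].foldr (· * ·) (x ql)) = P * x ql := rfl
    rw [this, hanti P (x ql)]
    rw [show x ql * P = comb x (ql :: p) pl from rfl]
    rw [comb_append]
    rw [← List.map_reverse, foldr_mul_neg]
  rw [hrev]
  simp only [List.length_cons, List.length_map]
  rw [show q.length + 1 + 1 = (q.length + 1) + 1 from rfl, neg_pow_smul_succ,
    smul_neg, ← neg_pow_smul_succ, neg_pow_smul_succ (q.length + 1), neg_neg]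

/-! ### The three flip sequences realizing adjacent transpositions -/

include hanti hFneg hF in
lemma opA {i k a : Fin n} {l₁ l₂ : List (Fin n)}
    (hil₁ : i ∉ l₁) (hil₂ : i ∉ l₂) (hkl₁ : k ∉ l₁) (hkl₂ : k ∉ l₂)
    (hik : i ≠ k) (hai : a ≠ i) (hak : a ≠ k) :
    F i (F k (F i (comb x (l₁ ++ i :: k :: l₂) a))) =
      -(comb x (l₁ ++ k :: i :: l₂) a) := by
  rw [L2 x F hanti hFneg hF (l₂ := k :: l₂) hil₁ (by simp [hik, hil₂]) hai]
  rw [F_pow F hFneg k, L3 x F hanti hF hkl₂ hak (by simp [List.mem_reverse, hkl₁]) hik]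
  rw [F_pow F hFneg i, L4 x F hanti hF hil₂ hai (by simp [hik, List.mem_reverse, hil₁])]
  rw [smul_smul]
  have hrev : ((k :: l₁.reverse).reverse ++ i :: l₂) = l₁ ++ k :: i :: l₂ := by
    simp
  rw [hrev]
  have hsc : ((-1 : ℤ) ^ (l₁.length + 1) * (-1 : ℤ) ^ ((k :: l₁.reverse).length + 1))
      = -1 := by
    rw [← pow_add]
    simp only [List.length_cons, List.length_reverse]
    exact Odd.neg_one_pow ⟨l₁.length + 1, by ring⟩
  rw [hsc]
  simp

include hanti hFneg hF in
lemma opB {i a : Fin n} {l : List (Fin n)}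
    (h1 : i ∉ l) (h2 : a ≠ i) (h3 : a ∉ l) :
    F i (F i (comb x (l ++ [i]) a)) = -(comb x (l ++ [a]) i) := by
  rw [L2 x F hanti hFneg hF (l₂ := []) h1 (by simp) h2]
  rw [F_pow F hFneg i]
  rw [show comb x [] a * comb x l.reverse i = comb x (a :: l.reverse) i from rfl]
  rw [L1 x F hF (by simp [List.mem_reverse, h2.symm, h1])]
  rw [smul_smul]
  have hrev : (a :: l.reverse).reverse = l ++ [a] := by simp
  rw [hrev]
  have hsc : ((-1 : ℤ) ^ (l.length + 1) * (-1 : ℤ) ^ ((a :: l.reverse).length + 1))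
      = -1 := by
    rw [← pow_add]
    simp only [List.length_cons, List.length_reverse]
    exact Odd.neg_one_pow ⟨l.length + 1, by ring⟩
  rw [hsc]
  simp

end Flips

/-! ### Step lemmas on the word of a permutation -/

section Steps

variable {m : ℕ} (x : Fin (m+1) → B) (F : Fin (m+1) → B → B)
  (hanti : ∀ a b : B, a * b = -(b * a))
  (hFneg : ∀ i b, F i (-b) = -(F i b))
  (hF : ∀ (i : Fin (m+1)) (l : List B),
      (∀ u ∈ l, u ∈ Subsemigroup.closure (x '' {j | j ≠ i})) →
      F i (l.foldr (· * ·) (x i)) =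
        ((-1 : ℤ) ^ (l.length + 1)) • (l.reverse.foldr (· * ·) (x i)))

def W (σ : Equiv.Perm (Fin (m+1))) : B :=
  comb x (List.ofFn fun j : Fin m => σ j.castSucc) (σ (Fin.last m))

include hanti hFneg hF in
lemma stepA (pp pp1 : Fin (m+1)) (hpv : (pp1:ℕ) = (pp:ℕ) + 1)
    (hp2 : (pp:ℕ) + 2 ≤ m) (σ : Equiv.Perm (Fin (m+1))) :
    F (σ pp) (F (σ pp1) (F (σ pp) (W x σ))) = -(W x (σ * Equiv.swap pp pp1)) := by
  have hpm : (pp:ℕ) + 1 < m := by omega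
  have inj : ∀ u v : Fin (m+1), σ u = σ v → (u:ℕ) = (v:ℕ) :=
    fun u v h => congrArg Fin.val (σ.injective h)
  set τ := Equiv.swap pp pp1 with hτ
  have hc1 : Fin.castSucc (⟨(pp:ℕ), by omega⟩ : Fin m) = pp := Fin.ext (by simp)
  have hc2 : Fin.castSucc (⟨(pp:ℕ)+1, hpm⟩ : Fin m) = pp1 := Fin.ext (by simp [hpv])
  have e1 := helper_split2 (fun j : Fin m => σ j.castSucc) (fun j : Fin m => σ j.castSucc)
    (pp:ℕ) hpm (fun _ _ _ => rfl)
  simp only [hc1, hc2] at e1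
  have hg : ∀ j : Fin m, (j:ℕ) ≠ (pp:ℕ) → (j:ℕ) ≠ (pp:ℕ) + 1 →
      (σ * τ) j.castSucc = σ j.castSucc := by
    intro j h1 h2
    show σ (τ j.castSucc) = σ j.castSucc
    congr 1
    apply Equiv.swap_apply_of_ne_of_ne
    · exact fun h => h1 (by simpa using congrArg Fin.val h)
    · exact fun h => h2 (by simpa [hpv] using congrArg Fin.val h)
  have e2 := helper_split2 (fun j : Fin m => σ j.castSucc)
    (fun j : Fin m => (σ * τ) j.castSucc) (pp:ℕ) hpm hg
  simp only [hc1, hc2] at e2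
  have v1 : (σ * τ) pp = σ pp1 := by
    show σ (τ pp) = σ pp1
    rw [hτ, Equiv.swap_apply_left]
  have v2 : (σ * τ) pp1 = σ pp := by
    show σ (τ pp1) = σ pp
    rw [hτ, Equiv.swap_apply_right]
  rw [v1, v2] at e2
  have elast : (σ * τ) (Fin.last m) = σ (Fin.last m) := by
    show σ (τ (Fin.last m)) = σ (Fin.last m)
    congr 1
    apply Equiv.swap_apply_of_ne_of_ne
    · exact fun h => by have := congrArg Fin.val h; simp at this; omega
    · exact fun h => by have := congrArg Fin.val h; simp [hpv] at this; omega
  have hi_take : σ pp ∉ (List.ofFn fun j : Fin m => σ j.castSucc).take (pp:ℕ) := by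
    intro hmem
    obtain ⟨j, hj, hv⟩ := mem_take_ofFn hmem
    have := inj _ _ hv; simp at this; omega
  have hk_take : σ pp1 ∉ (List.ofFn fun j : Fin m => σ j.castSucc).take (pp:ℕ) := by
    intro hmem
    obtain ⟨j, hj, hv⟩ := mem_take_ofFn hmem
    have := inj _ _ hv; simp [hpv] at this; omega
  have hi_drop : σ pp ∉ (List.ofFn fun j : Fin m => σ j.castSucc).drop ((pp:ℕ)+2) := by
    intro hmem
    obtain ⟨j, hj, hv⟩ := mem_drop_ofFn hmem
    have := inj _ _ hv; simp at this; omega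
  have hk_drop : σ pp1 ∉ (List.ofFn fun j : Fin m => σ j.castSucc).drop ((pp:ℕ)+2) := by
    intro hmem
    obtain ⟨j, hj, hv⟩ := mem_drop_ofFn hmem
    have := inj _ _ hv; simp [hpv] at this; omega
  have hik : σ pp ≠ σ pp1 := fun h => by have := inj _ _ h; omega
  have hai : σ (Fin.last m) ≠ σ pp := fun h => by have := inj _ _ h; simp at this; omega
  have hak : σ (Fin.last m) ≠ σ pp1 := fun h => by
    have := inj _ _ h; simp [hpv] at this; omega
  show F (σ pp) (F (σ pp1) (F (σ pp)
      (comb x (List.ofFn fun j : Fin m => σ j.castSucc) (σ (Fin.last m))))) =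
    -(comb x (List.ofFn fun j : Fin m => (σ * τ) j.castSucc) ((σ * τ) (Fin.last m)))
  rw [e1, e2, elast]
  exact opA x F hanti hFneg hF hi_take hi_drop hk_take hk_drop hik hai hak

include hanti hFneg hF in
lemma stepB (pp : Fin (m+1)) (hpv : (pp:ℕ) + 1 = m) (σ : Equiv.Perm (Fin (m+1))) :
    F (σ pp) (F (σ pp) (W x σ)) = -(W x (σ * Equiv.swap pp (Fin.last m))) := by
  have hpm : (pp:ℕ) < m := by omega
  have inj : ∀ u v : Fin (m+1), σ u = σ v → (u:ℕ) = (v:ℕ) :=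
    fun u v h => congrArg Fin.val (σ.injective h)
  set τ := Equiv.swap pp (Fin.last m) with hτ
  have hc1 : Fin.castSucc (⟨(pp:ℕ), hpm⟩ : Fin m) = pp := Fin.ext (by simp)
  have hdropnil : (List.ofFn fun j : Fin m => σ j.castSucc).drop ((pp:ℕ)+1) = [] := by
    apply List.drop_eq_nil_of_le
    simp [hpv]
  have e1 := helper_split1 (fun j : Fin m => σ j.castSucc) (fun j : Fin m => σ j.castSucc)
    (pp:ℕ) hpm (fun _ _ => rfl)
  rw [hdropnil] at e1
  simp only [hc1] at e1
  have hg : ∀ j : Fin m, (j:ℕ) ≠ (pp:ℕ) →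
      (σ * τ) j.castSucc = σ j.castSucc := by
    intro j h1
    show σ (τ j.castSucc) = σ j.castSucc
    congr 1
    apply Equiv.swap_apply_of_ne_of_ne
    · exact fun h => h1 (by simpa using congrArg Fin.val h)
    · exact fun h => by have := congrArg Fin.val h; simp at this; omega
  have e2 := helper_split1 (fun j : Fin m => σ j.castSucc)
    (fun j : Fin m => (σ * τ) j.castSucc) (pp:ℕ) hpm hg
  rw [hdropnil] at e2
  simp only [hc1] at e2
  have v1 : (σ * τ) pp = σ (Fin.last m) := by
    show σ (τ pp) = σ (Fin.last m)
    rw [hτ, Equiv.swap_apply_left]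
  rw [v1] at e2
  have elast : (σ * τ) (Fin.last m) = σ pp := by
    show σ (τ (Fin.last m)) = σ pp
    rw [hτ, Equiv.swap_apply_right]
  have hi_take : σ pp ∉ (List.ofFn fun j : Fin m => σ j.castSucc).take (pp:ℕ) := by
    intro hmem
    obtain ⟨j, hj, hv⟩ := mem_take_ofFn hmem
    have := inj _ _ hv; simp at this; omega
  have ha_take : σ (Fin.last m) ∉ (List.ofFn fun j : Fin m => σ j.castSucc).take (pp:ℕ) := by
    intro hmem
    obtain ⟨j, hj, hv⟩ := mem_take_ofFn hmem
    have := inj _ _ hv; simp at this; omega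
  have hai : σ (Fin.last m) ≠ σ pp := fun h => by
    have := inj _ _ h; simp at this; omega
  show F (σ pp) (F (σ pp)
      (comb x (List.ofFn fun j : Fin m => σ j.castSucc) (σ (Fin.last m)))) =
    -(comb x (List.ofFn fun j : Fin m => (σ * τ) j.castSucc) ((σ * τ) (Fin.last m)))
  rw [e1, e2, elast]
  exact opB x F hanti hFneg hF hi_take hai ha_take

end Steps

end FlipAux

/-- **Flips generate all signed permutations of the left-normed word.**
In the free anti-commutative algebra on `x_1,…,x_n` (here: any anti-commutative
algebra `B` with generators `x`), suppose `F_1,…,F_n` are additive maps such that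
`F_i` acts as the `x_i`-flip: on every word in normal form
`(ad u_1 ⋯ ad u_k)(x_i)` with the `u_j` words not containing `x_i` (i.e. lying in
the subsemigroup generated by the other generators), it satisfies
`F_i((ad u_1 ⋯ ad u_k)(x_i)) = −(−1)^k (ad u_k ⋯ ad u_1)(x_i)`.
Then the group generated by the flips, acting on the orbit of
`w = {x_1,{x_2,…,{x_{n−1},x_n}…}}`, contains for every permutation `σ ∈ S_n` the
signed word `sgn(σ)·{x_{σ(1)},{x_{σ(2)},…,{x_{σ(n−1)},x_{σ(n)}}…}}`. -/
theorem flips_generate_signed_permutations (m : ℕ) (B : Type)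
    [NonUnitalNonAssocRing B]
    (hanti : ∀ a b : B, a * b = -(b * a))
    (x : Fin (m + 1) → B)
    (F : Fin (m + 1) → B → B)
    (hFneg : ∀ i b, F i (-b) = -(F i b))
    (hF : ∀ (i : Fin (m + 1)) (l : List B),
      (∀ u ∈ l, u ∈ Subsemigroup.closure (x '' {j | j ≠ i})) →
      F i (l.foldr (· * ·) (x i)) =
        ((-1 : ℤ) ^ (l.length + 1)) • (l.reverse.foldr (· * ·) (x i)))
    (σ : Equiv.Perm (Fin (m + 1))) :
    ∃ l : List (Fin (m + 1)),
      l.foldl (fun b i => F i b) (leftNormed x 1) =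
        ((Equiv.Perm.sign σ : ℤ)) • leftNormed x σ := by
  classical
  have foldl_neg : ∀ (l : List (Fin (m+1))) (b : B),
      l.foldl (fun b i => F i b) (-b) = -(l.foldl (fun b i => F i b) b) := by
    intro l
    induction l with
    | nil => intro b; rfl
    | cons i t ih =>
      intro b
      simp only [List.foldl_cons, hFneg]
      exact ih _
  have hW : ∀ τ : Equiv.Perm (Fin (m+1)), leftNormed x τ = FlipAux.W x τ := by
    intro τ
    rw [leftNormed, FlipAux.W, FlipAux.comb, List.map_ofFn]
    rfl
  set Reach : Equiv.Perm (Fin (m+1)) → Prop := fun τ =>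
    ∃ l : List (Fin (m+1)), l.foldl (fun b i => F i b) (leftNormed x 1) =
      ((Equiv.Perm.sign τ : ℤ)) • leftNormed x τ with hReach
  suffices h : Reach σ from h
  have hstep : ∀ (i : Fin m) (ρ : Equiv.Perm (Fin (m+1))), Reach ρ →
      Reach (ρ * Equiv.swap i.castSucc i.succ) := by
    rintro i ρ ⟨l₁, h₁⟩
    have key : ∃ l₂ : List (Fin (m+1)),
        l₂.foldl (fun b i => F i b) (FlipAux.W x ρ)
          = -(FlipAux.W x (ρ * Equiv.swap i.castSucc i.succ)) := by
      rcases Nat.lt_or_ge ((i:ℕ)+1) m with hc | hc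
      · refine ⟨[ρ i.castSucc, ρ i.succ, ρ i.castSucc], ?_⟩
        have := FlipAux.stepA x F hanti hFneg hF i.castSucc i.succ (by simp)
          (by simp; omega) ρ
        simpa using this
      · have hlast : i.succ = Fin.last m := by
          apply Fin.ext
          simp
          omega
        refine ⟨[ρ i.castSucc, ρ i.castSucc], ?_⟩
        rw [hlast]
        have := FlipAux.stepB x F hanti hFneg hF i.castSucc (by simp; omega) ρ
        simpa using this
    obtain ⟨l₂, h₂⟩ := key
    refine ⟨l₁ ++ l₂, ?_⟩
    rw [List.foldl_append, h₁]
    have hswap_ne : i.castSucc ≠ i.succ := (Fin.castSucc_lt_succ : i.castSucc < i.succ).ne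
    have hsgn : (Equiv.Perm.sign (ρ * Equiv.swap i.castSucc i.succ) : ℤ)
        = -(Equiv.Perm.sign ρ : ℤ) := by
      rw [Equiv.Perm.sign_mul, Equiv.Perm.sign_swap hswap_ne]
      push_cast
      ring
    rw [hsgn, hW ρ, hW (ρ * Equiv.swap i.castSucc i.succ)]
    rcases Int.units_eq_one_or (Equiv.Perm.sign ρ) with hu | hu
    · rw [hu]
      simp only [Units.val_one, one_smul]
      rw [h₂]
      simp
    · rw [hu]
      simp only [Units.val_neg, Units.val_one, neg_smul, one_smul]
      rw [foldl_neg, h₂]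
  have htop : σ ∈ Submonoid.closure
      (Set.range fun i : Fin m => Equiv.swap i.castSucc i.succ) := by
    rw [Equiv.Perm.mclosure_swap_castSucc_succ]
    exact Submonoid.mem_top σ
  have main : ∀ ρ, Reach ρ → Reach (ρ * σ) := by
    induction htop using Submonoid.closure_induction with
    | mem τ' hτ' =>
      obtain ⟨i, rfl⟩ := hτ'
      exact fun ρ h => hstep i ρ h
    | one => intro ρ h; simpa using h
    | mul a b ha hb iha ihb =>
      intro ρ h
      rw [← mul_assoc]
      exact ihb _ (iha _ h)
  have r1 : Reach 1 := ⟨[], by simp⟩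
  have := main 1 r1
  simpa using this
end
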